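/- For any real t ≥ 1 and any k ∈ [0,1], 2tk(1-k)/(tk+1) ≤ 2(√(1+1/t) - √(1/t))², with equality when k = (√(t+1)-1)/t. -/

import Mathlib

theorem stmt6 (t : ℝ) (ht : 1 ≤ t) :
    (∀ k : ℝ, k ∈ Set.Icc (0:ℝ) 1 →
      2 * t * k * (1 - k) / (t * k + 1)
        ≤ 2 * (Real.sqrt (1 + 1 / t) - Real.sqrt (1 / t)) ^ 2) ∧
    2 * t * ((Real.sqrt (t + 1) - 1) / t) * (1 - (Real.sqrt (t + 1) - 1) / t)
        / (t * ((Real.sqrt (t + 1) - 1) / t) + 1)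
      = 2 * (Real.sqrt (1 + 1 / t) - Real.sqrt (1 / t)) ^ 2 := by
  have ht0 : (0:ℝ) < t := lt_of_lt_of_le one_pos ht
  set s := Real.sqrt (t + 1) with hs
  have hs2 : s ^ 2 = t + 1 := Real.sq_sqrt (by linarith)
  have hs0 : 0 ≤ s := Real.sqrt_nonneg _
  have hs1 : 1 ≤ s := by nlinarith
  have ha : (Real.sqrt (1 + 1 / t)) ^ 2 = 1 + 1 / t := Real.sq_sqrt (by positivity)
  have hb : (Real.sqrt (1 / t)) ^ 2 = 1 / t := Real.sq_sqrt (by positivity)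
  have hab : Real.sqrt (1 + 1 / t) * Real.sqrt (1 / t) = s / t := by
    rw [← Real.sqrt_mul (by positivity),
      show (1 + 1 / t) * (1 / t) = (t + 1) / t ^ 2 by rw [eq_div_iff (by positivity)]; field_simp,
      Real.sqrt_div (by linarith), Real.sqrt_sq ht0.le]
  have hRHS : 2 * (Real.sqrt (1 + 1 / t) - Real.sqrt (1 / t)) ^ 2
      = 2 * (t + 2 - 2 * s) / t := by
    rw [sub_sq, ha, hb, mul_assoc 2, hab]
    field_simp
    ring
  constructor
  · intro k hk
    obtain ⟨hk0, hk1⟩ := hk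
    rw [hRHS, div_le_div_iff₀ (by nlinarith) ht0]
    nlinarith [sq_nonneg (t * k + 1 - s), hs2]
  · have hne : t * ((s - 1) / t) + 1 = s := by field_simp; ring
    rw [hRHS, hne]
    have hsn : s ≠ 0 := by linarith
    field_simp
    nlinarith [hs2]
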